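/- Let Γ be a strongly regular graph with parameters (n,k,λ,μ) and let (x,y) be a 3-isoregular edge of Γ with associated parameters Q, R, W. Then λ(λ-Q-1) = R(k-λ-1). -/

import Mathlib

open Finset

variable {V : Type*}

/-- The number of common neighbors of the three vertices `x, y, z` in `G`. -/
def commonValency [Fintype V] [DecidableEq V] (G : SimpleGraph V)
    [DecidableRel G.Adj] (x y z : V) : ℕ :=
  (G.neighborFinset x ∩ G.neighborFinset y ∩ G.neighborFinset z).card

/-- `(x,y)` is a 3-isoregular edge of `G` with associated parameters `Q, R, W`:
the number of common neighbors of `{x,y,z}` equals `Q`, `R` or `W` according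
to whether the induced subgraph on `{x,y,z}` is `K₃`, `K_{1,2}` or `K₂ + K₁`. -/
def IsoregEdgeWith [Fintype V] [DecidableEq V] (G : SimpleGraph V)
    [DecidableRel G.Adj] (x y : V) (Q R W : ℕ) : Prop :=
  G.Adj x y ∧
  (∀ z, z ≠ x → z ≠ y → G.Adj z x → G.Adj z y → commonValency G x y z = Q) ∧
  (∀ z, z ≠ x → z ≠ y → Xor' (G.Adj z x) (G.Adj z y) → commonValency G x y z = R) ∧
  (∀ z, z ≠ x → z ≠ y → ¬ G.Adj z x → ¬ G.Adj z y → commonValency G x y z = W)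

/-- `(x,z)` is a 3-isoregular non-edge of `G` with associated parameters
`R', W', V'`: the number of common neighbors of `{x,z,u}` equals `R'`, `W'`
or `V'` according to whether the induced subgraph on `{x,z,u}` is `K_{1,2}`,
`K₂ + K₁` or `3K₁`. -/
def IsoregNonEdgeWith [Fintype V] [DecidableEq V] (G : SimpleGraph V)
    [DecidableRel G.Adj] (x z : V) (R' W' V' : ℕ) : Prop :=
  x ≠ z ∧ ¬ G.Adj x z ∧
  (∀ u, u ≠ x → u ≠ z → G.Adj u x → G.Adj u z → commonValency G x z u = R') ∧
  (∀ u, u ≠ x → u ≠ z → Xor' (G.Adj u x) (G.Adj u z) → commonValency G x z u = W') ∧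
  (∀ u, u ≠ x → u ≠ z → ¬ G.Adj u x → ¬ G.Adj u z → commonValency G x z u = V')

lemma card_common_aux [Fintype V] [DecidableEq V] (G : SimpleGraph V)
    [DecidableRel G.Adj] (v w : V) :
    Fintype.card (G.commonNeighbors v w) = (G.neighborFinset v ∩ G.neighborFinset w).card := by
  rw [← Set.toFinset_card]
  congr 1
  ext u
  rw [Set.mem_toFinset]
  simp [SimpleGraph.commonNeighbors]

/-- For a 3-isoregular edge `(x,y)` of an `(n,k,λ,μ)`-strongly
regular graph with associated parameters `Q,R,W`, we have
`λ(λ-Q-1) = R(k-λ-1)`. -/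
theorem isoreg_edge_eq1 [Fintype V] [DecidableEq V] (G : SimpleGraph V)
    [DecidableRel G.Adj] (n k lam mu : ℕ) (h : G.IsSRGWith n k lam mu)
    (x y : V) (Q R W : ℕ) (hxy : IsoregEdgeWith G x y Q R W) :
    (lam : ℤ) * (lam - Q - 1) = R * (k - lam - 1) := by
  classical
  obtain ⟨hadj, hQ, hR, hW⟩ := hxy
  set A := G.neighborFinset x ∩ G.neighborFinset y with hAdef
  set B := (G.neighborFinset x \ G.neighborFinset y).erase y with hBdef
  have hA : A.card = lam := by rw [← card_common_aux]; exact h.of_adj x y hadj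
  have hyB : y ∈ G.neighborFinset x \ G.neighborFinset y := by
    simp [hadj]
  have hBcard : B.card + 1 + lam = k := by
    have h1 : (G.neighborFinset x \ G.neighborFinset y).card + A.card
        = (G.neighborFinset x).card := card_sdiff_add_card_inter _ _
    have h2 : (G.neighborFinset x).card = k := h.regular x
    have h3 : B.card = (G.neighborFinset x \ G.neighborFinset y).card - 1 :=
      card_erase_of_mem hyB
    have h4 : 0 < (G.neighborFinset x \ G.neighborFinset y).card :=
      card_pos.mpr ⟨y, hyB⟩
    omega
  -- count from the A side
  have hcz : ∀ z ∈ A, lam = Q + 1 + (B.filter (fun w => G.Adj z w)).card := by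
    intro z hz
    rw [hAdef, mem_inter, SimpleGraph.mem_neighborFinset, SimpleGraph.mem_neighborFinset] at hz
    have hzx : G.Adj z x := hz.1.symm
    have hzy : G.Adj z y := hz.2.symm
    set S := G.neighborFinset x ∩ G.neighborFinset z with hSdef
    have hS : S.card = lam := by rw [← card_common_aux]; exact h.of_adj x z hz.1
    have hQz : (S ∩ G.neighborFinset y).card = Q := by
      rw [← hQ z hzx.ne hzy.ne hzx hzy]
      unfold commonValency
      congr 1
      ext u
      simp only [hSdef, mem_inter]
      tauto
    have hfe : B.filter (fun w => G.Adj z w) = (S \ G.neighborFinset y).erase y := by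
      ext u
      simp only [hBdef, hSdef, mem_filter, mem_erase, mem_sdiff, mem_inter,
        SimpleGraph.mem_neighborFinset]
      constructor
      · rintro ⟨⟨huy, hux, huny⟩, hzu⟩
        exact ⟨huy, ⟨hux, hzu⟩, huny⟩
      · rintro ⟨huy, ⟨hux, hzu⟩, huny⟩
        exact ⟨⟨huy, hux, huny⟩, hzu⟩
    have hyS : y ∈ S \ G.neighborFinset y := by
      simp [hSdef, hadj, hzy, SimpleGraph.irrefl]
    have h5 : (S \ G.neighborFinset y).card + (S ∩ G.neighborFinset y).card = S.card :=
      card_sdiff_add_card_inter _ _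
    have h6 : ((S \ G.neighborFinset y).erase y).card = (S \ G.neighborFinset y).card - 1 :=
      card_erase_of_mem hyS
    have h7 : 0 < (S \ G.neighborFinset y).card := card_pos.mpr ⟨y, hyS⟩
    rw [hfe]
    omega
  -- count from the B side
  have hcw : ∀ w ∈ B, (A.filter (fun z => G.Adj z w)).card = R := by
    intro w hw
    rw [hBdef, mem_erase, mem_sdiff, SimpleGraph.mem_neighborFinset,
      SimpleGraph.mem_neighborFinset] at hw
    obtain ⟨hwy, hwx, hwny⟩ := hw
    have hxw : G.Adj w x := hwx.symm
    have hR' := hR w hxw.ne hwy (Or.inl ⟨hxw, fun hc => hwny hc.symm⟩)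
    rw [← hR']
    unfold commonValency
    congr 1
    ext u
    simp only [hAdef, mem_filter, mem_inter, SimpleGraph.mem_neighborFinset]
    constructor
    · rintro ⟨⟨h1, h2⟩, h3⟩
      exact ⟨⟨h1, h2⟩, h3.symm⟩
    · rintro ⟨⟨h1, h2⟩, h3⟩
      exact ⟨⟨h1, h2⟩, h3.symm⟩
  have hdc : ∑ z ∈ A, (B.filter (fun w => G.Adj z w)).card
      = ∑ w ∈ B, (A.filter (fun z => G.Adj z w)).card := by
    simpa [Finset.bipartiteAbove, Finset.bipartiteBelow] using
      Finset.sum_card_bipartiteAbove_eq_sum_card_bipartiteBelow (fun a b => G.Adj a b)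
        (s := A) (t := B)
  have hsumB : ∑ w ∈ B, (A.filter (fun z => G.Adj z w)).card = B.card * R := by
    rw [Finset.sum_congr rfl hcw, Finset.sum_const, smul_eq_mul]
  rcases A.eq_empty_or_nonempty with hAe | ⟨z0, hz0⟩
  · have hlam0 : lam = 0 := by rw [← hA, hAe]; simp
    have : B.card * R = 0 := by
      rw [← hsumB, ← hdc, hAe]; simp
    have hk : (k : ℤ) - lam - 1 = B.card := by push_cast; omega
    rw [hk, hlam0]
    push_cast
    nlinarith [this]
  · have hc0 := hcz z0 hz0
    set c := (B.filter (fun w => G.Adj z0 w)).card with hcdef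
    have hsumA : ∑ z ∈ A, (B.filter (fun w => G.Adj z w)).card = A.card * c := by
      have hall : ∀ z ∈ A, (B.filter (fun w => G.Adj z w)).card = c := by
        intro z hz
        have h1 := hcz z hz
        omega
      rw [Finset.sum_congr rfl hall, Finset.sum_const, smul_eq_mul]
    have hkey : lam * c = B.card * R := by
      rw [← hA, ← hsumA, hdc, hsumB]
    have h1 : (lam : ℤ) - Q - 1 = c := by push_cast; omega
    have h2 : (k : ℤ) - lam - 1 = B.card := by push_cast; omega
    rw [h1, h2]
    push_cast
    nlinarith [hkey]
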